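/- For every finite simple graph G, χ_NL(μ(G)) ≤ χ_NL(G) + 1, where μ(G) is the Mycielski graph of G. -/

import Mathlib

open SimpleGraph

/-- A coloring `c : V → Fin k` is a *neighbor-locating coloring* of `G` if it is proper and
any two distinct vertices with the same color have different sets of colors on their
open neighborhoods. -/
def IsNLColoring {V : Type*} (G : SimpleGraph V) {k : ℕ} (c : V → Fin k) : Prop :=
  (∀ u v : V, G.Adj u v → c u ≠ c v) ∧
  ∀ u v : V, u ≠ v → c u = c v → c '' (G.neighborSet u) ≠ c '' (G.neighborSet v)

/-- The neighbor-locating chromatic number: the least `k` admitting an NL-coloring. -/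
noncomputable def nlChromaticNumber {V : Type*} (G : SimpleGraph V) : ℕ :=
  sInf {k : ℕ | ∃ c : V → Fin k, IsNLColoring G c}

set_option linter.unreachableTactic false in
set_option linter.unusedTactic false in
/-- The Mycielski graph of `G`: vertices `v_a = Sum.inl a`, shadow vertices
`u_a = Sum.inr (Sum.inl a)` and the apex `w = Sum.inr (Sum.inr ())`. -/
def mycielskian {α : Type*} (G : SimpleGraph α) : SimpleGraph (α ⊕ α ⊕ Unit) where
  Adj x y :=
    match x, y with
    | Sum.inl a, Sum.inl b => G.Adj a b
    | Sum.inl a, Sum.inr (Sum.inl b) => G.Adj a b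
    | Sum.inr (Sum.inl a), Sum.inl b => G.Adj a b
    | Sum.inr (Sum.inl _), Sum.inr (Sum.inr _) => True
    | Sum.inr (Sum.inr _), Sum.inr (Sum.inl _) => True
    | _, _ => False
  symm := by
    constructor
    rintro (a | a | a) (b | b | b) h <;>
      first | exact G.symm h | exact G.adj_symm h | trivial | exact h.elim
  loopless := by
    constructor
    rintro (a | a | a) h <;> first | exact G.loopless _ h | exact G.irrefl h | exact h.elim

/-- For every finite graph `G`, `χ_NL(μ(G)) ≤ χ_NL(G) + 1`. -/
theorem nlChromaticNumber_mycielskian_le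
    {α : Type*} [Fintype α] (G : SimpleGraph α) :
    nlChromaticNumber (mycielskian G) ≤ nlChromaticNumber G + 1 := by
  have hne : {k : ℕ | ∃ c : α → Fin k, IsNLColoring G c}.Nonempty := by
    refine ⟨Fintype.card α, (Fintype.equivFin α : α → Fin _), fun u v h he =>
      G.ne_of_adj h ((Fintype.equivFin α).injective he), fun u v huv he =>
      absurd ((Fintype.equivFin α).injective he) huv⟩
  set k := nlChromaticNumber G with hk
  obtain ⟨c, hc⟩ : ∃ c : α → Fin k, IsNLColoring G c := Nat.sInf_mem hne
  set c' : α ⊕ α ⊕ Unit → Fin (k + 1) :=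
    Sum.elim (fun a => (c a).castSucc)
      (Sum.elim (fun a => (c a).castSucc) (fun _ => Fin.last k)) with hc'
  have hlast : ∀ x : Fin k, x.castSucc ≠ Fin.last k := fun x => (Fin.castSucc_lt_last x).ne
  have hnot : ∀ S : Set α, Fin.last k ∉ Fin.castSucc '' (c '' S) := by
    rintro S ⟨x, -, hx⟩
    exact hlast x hx
  have himgA : ∀ a : α, c' '' ((mycielskian G).neighborSet (Sum.inl a))
      = Fin.castSucc '' (c '' G.neighborSet a) := by
    intro a
    ext x
    constructor
    · rintro ⟨(b | b | u), hy, rfl⟩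
      · exact ⟨c b, ⟨b, hy, rfl⟩, rfl⟩
      · exact ⟨c b, ⟨b, hy, rfl⟩, rfl⟩
      · exact hy.elim
    · rintro ⟨x, ⟨b, hb, rfl⟩, rfl⟩
      exact ⟨Sum.inl b, hb, rfl⟩
  have himgB : ∀ a : α, c' '' ((mycielskian G).neighborSet (Sum.inr (Sum.inl a)))
      = insert (Fin.last k) (Fin.castSucc '' (c '' G.neighborSet a)) := by
    intro a
    ext x
    constructor
    · rintro ⟨(b | b | u), hy, rfl⟩
      · exact Or.inr ⟨c b, ⟨b, hy, rfl⟩, rfl⟩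
      · exact hy.elim
      · exact Or.inl rfl
    · rintro (rfl | ⟨x, ⟨b, hb, rfl⟩, rfl⟩)
      · exact ⟨Sum.inr (Sum.inr ()), trivial, rfl⟩
      · exact ⟨Sum.inl b, hb, rfl⟩
  refine Nat.sInf_le ⟨c', fun x y hxy => ?_, fun x y hxy hcxy => ?_⟩
  · rcases x with a | a | u <;> rcases y with b | b | v <;>
      simp only [hc', Sum.elim_inl, Sum.elim_inr] <;>
      first
        | exact fun he => hc.1 a b hxy (Fin.castSucc_injective k he)
        | exact hlast _
        | exact fun he => hlast _ he.symm
        | exact False.elim hxy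
  · rcases x with a | a | u <;> rcases y with b | b | v <;>
      simp only [hc', Sum.elim_inl, Sum.elim_inr] at hcxy
    · -- inl inl
      have hab : a ≠ b := fun h => hxy (by rw [h])
      rw [himgA, himgA]
      intro h
      exact hc.2 a b hab (Fin.castSucc_injective k hcxy)
        (Set.image_injective.mpr (Fin.castSucc_injective k) h)
    · -- inl, inr inl
      rw [himgA, himgB]
      intro h
      exact hnot _ (h ▸ Set.mem_insert _ _)
    · exact absurd hcxy (hlast _)
    · -- inr inl, inl
      rw [himgA, himgB]
      intro h
      exact hnot _ (h.symm ▸ Set.mem_insert _ _)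
    · -- inr inl, inr inl
      have hab : a ≠ b := fun h => hxy (by rw [h])
      rw [himgB, himgB]
      intro h
      have hS : Fin.castSucc '' (c '' G.neighborSet a) = Fin.castSucc '' (c '' G.neighborSet b) := by
        rw [← Set.insert_diff_self_of_notMem (hnot (G.neighborSet a)), h,
          Set.insert_diff_self_of_notMem (hnot (G.neighborSet b))]
      exact hc.2 a b hab (Fin.castSucc_injective k hcxy)
        (Set.image_injective.mpr (Fin.castSucc_injective k) hS)
    · exact absurd hcxy (hlast _)
    · exact absurd hcxy.symm (hlast _)
    · exact absurd hcxy.symm (hlast _)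
    · exact absurd rfl hxy
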